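/- The number of ternary trees with m internal vertices equals (1/(2m+1)) * C(3m, m). -/

import Mathlib

/-- Ternary trees: the free algebra on one generator `leaf` with one ternary
operation `node`. -/
inductive TernaryTree : Type
  | leaf : TernaryTree
  | node : TernaryTree → TernaryTree → TernaryTree → TernaryTree
deriving DecidableEq

namespace TernaryTree

/-- Number of internal vertices (applications of the ternary operation). -/
def internal : TernaryTree → ℕ
  | leaf => 0
  | node a b c => internal a + internal b + internal c + 1

/-- The dual of a ternary tree. -/
def dual : TernaryTree → TernaryTree
  | leaf => leaf
  | node a b c => node (dual c) (dual b) (dual a)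

end TernaryTree

namespace TernaryTree

instance : Inhabited TernaryTree := ⟨leaf⟩

/-- Total number of internal vertices of a forest (list of trees). -/
def slist : List TernaryTree → ℕ
  | [] => 0
  | t :: l => t.internal + slist l

@[simp] lemma slist_nil : slist [] = 0 := rfl
@[simp] lemma slist_cons (t : TernaryTree) (l : List TernaryTree) :
    slist (t :: l) = t.internal + slist l := rfl

lemma internal_eq_zero {t : TernaryTree} : t.internal = 0 ↔ t = leaf := by
  cases t <;> simp [internal]

lemma slist_replicate_leaf (r : ℕ) : slist (List.replicate r leaf) = 0 := by
  induction r with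
  | zero => rfl
  | succ n ih => simp [List.replicate_succ, ih, internal]

lemma eq_replicate_of_slist_eq_zero :
    ∀ {l : List TernaryTree}, slist l = 0 → l = List.replicate l.length leaf := by
  intro l
  induction l with
  | nil => simp
  | cons t l ih =>
    intro h
    simp only [slist_cons, Nat.add_eq_zero] at h
    obtain ⟨h1, h2⟩ := h
    rw [internal_eq_zero] at h1
    subst h1
    rw [List.length_cons, List.replicate_succ, ← ih h2]

/-- Glue the first three trees of a list into one node. -/
def glue : List TernaryTree → List TernaryTree
  | a :: b :: c :: l => node a b c :: l
  | l => l

/-- The finset of forests of `r` ternary trees with `m` total internal vertices. -/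
def forests : ℕ → ℕ → Finset (List TernaryTree)
  | r, 0 => {List.replicate r leaf}
  | 0, _ + 1 => ∅
  | r + 1, m + 1 =>
      ((forests r (m + 1)).map ⟨fun l => leaf :: l, List.cons_injective⟩)
        ∪ (forests (r + 3) m).image glue
  termination_by r m => (m, r)
  decreasing_by
    · exact Prod.Lex.right _ (by omega)
    · exact Prod.Lex.left _ _ (by omega)

lemma mem_forests (m : ℕ) : ∀ (r : ℕ) (l : List TernaryTree),
    l ∈ forests r m ↔ l.length = r ∧ slist l = m := by
  induction m with
  | zero =>
    intro r l
    rw [forests]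
    simp only [Finset.mem_singleton]
    constructor
    · rintro rfl
      simp [slist_replicate_leaf]
    · rintro ⟨h1, h2⟩
      rw [eq_replicate_of_slist_eq_zero h2, h1]
  | succ m ihm =>
    intro r
    induction r with
    | zero =>
      intro l
      rw [forests]
      simp only [Finset.notMem_empty, false_iff, not_and]
      intro h1
      rw [List.length_eq_zero_iff] at h1
      subst h1
      simp
    | succ r ihr =>
      intro l
      rw [forests]
      simp only [Finset.mem_union, Finset.mem_map, Finset.mem_image,
        Function.Embedding.coeFn_mk]
      constructor
      · rintro (⟨l', hl', rfl⟩ | ⟨l', hl', rfl⟩)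
        · obtain ⟨h1, h2⟩ := (ihr l').mp hl'
          simp [internal, h1, h2]
        · obtain ⟨h1, h2⟩ := (ihm (r + 3) l').mp hl'
          rcases l' with _ | ⟨a, _ | ⟨b, _ | ⟨c, t⟩⟩⟩ <;> simp_all [glue, internal]
          omega
      · rintro ⟨h1, h2⟩
        rcases l with _ | ⟨t, l⟩
        · simp at h1
        cases t with
        | leaf =>
          left
          exact ⟨l, (ihr l).mpr ⟨by simpa using h1, by simpa [internal] using h2⟩, rfl⟩
        | node a b c =>
          right
          refine ⟨a :: b :: c :: l, (ihm (r + 3) _).mpr ⟨by simpa using h1, ?_⟩, rfl⟩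
          simp only [slist_cons, internal] at h2 ⊢
          omega

lemma card_forests_base (r : ℕ) : (forests r 0).card = 1 := by
  rw [forests]; simp

lemma card_forests_zero (m : ℕ) : (forests 0 (m + 1)).card = 0 := by
  rw [forests]; simp

lemma length_of_mem_forests {r m : ℕ} {l : List TernaryTree} (h : l ∈ forests r m) :
    l.length = r := ((mem_forests m r l).mp h).1

lemma card_forests_succ (r m : ℕ) :
    (forests (r + 1) (m + 1)).card = (forests r (m + 1)).card + (forests (r + 3) m).card := by
  rw [forests]
  rw [Finset.card_union_of_disjoint, Finset.card_map, Finset.card_image_of_injOn]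
  · intro l1 h1 l2 h2 heq
    have hl1 := length_of_mem_forests (Finset.mem_coe.mp h1)
    have hl2 := length_of_mem_forests (Finset.mem_coe.mp h2)
    rcases l1 with _ | ⟨a, _ | ⟨b, _ | ⟨c, t⟩⟩⟩ <;> try simp at hl1
    rcases l2 with _ | ⟨a', _ | ⟨b', _ | ⟨c', t'⟩⟩⟩ <;> try simp at hl2
    simp only [glue, List.cons.injEq, node.injEq] at heq
    obtain ⟨⟨rfl, rfl, rfl⟩, rfl⟩ := heq
    rfl
  · rw [Finset.disjoint_left]
    rintro x hx1 hx2
    simp only [Finset.mem_map, Function.Embedding.coeFn_mk] at hx1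
    simp only [Finset.mem_image] at hx2
    obtain ⟨l1, _, rfl⟩ := hx1
    obtain ⟨l2, hl2, heq⟩ := hx2
    have hlen := length_of_mem_forests hl2
    rcases l2 with _ | ⟨a, _ | ⟨b, _ | ⟨c, t⟩⟩⟩
    · simp at hlen
    · simp at hlen
    · simp at hlen
    · simp [glue] at heq

lemma qformula (m : ℕ) : ∀ r : ℕ,
    ((3 * m + r : ℕ) : ℚ) * ((forests r m).card : ℚ)
      = (r : ℚ) * (((3 * m + r).choose m : ℕ) : ℚ) := by
  induction m with
  | zero =>
    intro r
    rw [card_forests_base]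
    simp
  | succ m ihm =>
    intro r
    induction r with
    | zero =>
      rw [card_forests_zero]
      simp
    | succ r ihr =>
      have hcard := card_forests_succ r m
      have h1 := ihr
      have h2 := ihm (r + 3)
      have e2 : 3 * (m + 1) + r = 3 * m + r + 3 := by ring
      have e3 : 3 * m + (r + 3) = 3 * m + r + 3 := by ring
      rw [e2] at h1
      rw [e3] at h2
      have hkey := Nat.choose_succ_right_eq (3 * m + r + 3) m
      have hs : 3 * m + r + 3 - m = 2 * m + r + 3 := by omega
      rw [hs] at hkey
      have key : (((3 * m + r + 3).choose (m + 1) : ℕ) : ℚ) * ((m : ℚ) + 1)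
          = (((3 * m + r + 3).choose m : ℕ) : ℚ) * (2 * (m : ℚ) + (r : ℚ) + 3) := by
        exact_mod_cast congrArg (fun x : ℕ => (x : ℚ)) hkey
      have egoal : 3 * (m + 1) + (r + 1) = (3 * m + r + 3) + 1 := by ring
      rw [egoal, Nat.choose_succ_succ']
      have hne : ((3 * m + r + 3 : ℕ) : ℚ) ≠ 0 := by
        exact_mod_cast (by omega : (3 * m + r + 3 : ℕ) ≠ 0)
      apply mul_left_cancel₀ hne
      have hc : ((forests (r + 1) (m + 1)).card : ℚ)
          = ((forests r (m + 1)).card : ℚ) + ((forests (r + 3) m).card : ℚ) := by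
        exact_mod_cast congrArg (fun x : ℕ => (x : ℚ)) hcard
      push_cast at h1 h2 key hc ⊢
      linear_combination (3 * (m : ℚ) + (r : ℚ) + 3) * (3 * (m : ℚ) + (r : ℚ) + 4) * hc
        + (3 * (m : ℚ) + (r : ℚ) + 4) * h1 + (3 * (m : ℚ) + (r : ℚ) + 4) * h2 - 3 * key

lemma nat_formula (m : ℕ) : (3 * m + 1) * (forests 1 m).card = (3 * m + 1).choose m := by
  have h := qformula m 1
  push_cast at h
  rw [← one_mul ((3 * m + 1).choose m)]
  exact_mod_cast h

lemma forests_one_shape {m : ℕ} {l : List TernaryTree} (h : l ∈ forests 1 m) :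
    ∃ t : TernaryTree, l = [t] ∧ t.internal = m := by
  obtain ⟨h1, h2⟩ := (mem_forests m 1 l).mp h
  rcases l with _ | ⟨t, _ | _⟩ <;> simp_all

/-- The finset of ternary trees with `m` internal vertices. -/
def treesOf (m : ℕ) : Finset TernaryTree := (forests 1 m).image List.headI

lemma mem_treesOf {m : ℕ} {t : TernaryTree} : t ∈ treesOf m ↔ t.internal = m := by
  simp only [treesOf, Finset.mem_image]
  constructor
  · rintro ⟨l, hl, rfl⟩
    obtain ⟨u, rfl, hu⟩ := forests_one_shape hl
    simpa using hu
  · intro h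
    exact ⟨[t], (mem_forests m 1 [t]).mpr ⟨rfl, by simp [h]⟩, rfl⟩

lemma card_treesOf (m : ℕ) : (treesOf m).card = (forests 1 m).card := by
  refine Finset.card_image_of_injOn ?_
  intro l1 h1 l2 h2 heq
  obtain ⟨t1, rfl, -⟩ := forests_one_shape (Finset.mem_coe.mp h1)
  obtain ⟨t2, rfl, -⟩ := forests_one_shape (Finset.mem_coe.mp h2)
  simpa using heq

end TernaryTree

/-- The number of ternary trees with `m` internal vertices equals
`(1/(2m+1)) * C(3m, m)`. -/
theorem ternary_count (m : ℕ) :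
    (2 * m + 1) * Nat.card {t : TernaryTree // t.internal = m} = Nat.choose (3 * m) m := by
  have hset : {t : TernaryTree | t.internal = m} = ↑(TernaryTree.treesOf m) := by
    ext t; simp [TernaryTree.mem_treesOf]
  have hcard : Nat.card {t : TernaryTree // t.internal = m}
      = (TernaryTree.treesOf m).card := by
    rw [show Nat.card {t : TernaryTree // t.internal = m}
        = Nat.card {t : TernaryTree | t.internal = m} from rfl,
      Nat.card_coe_set_eq, hset, Set.ncard_coe_finset]
  rw [hcard, TernaryTree.card_treesOf]
  have h3 := TernaryTree.nat_formula m
  have h6 := Nat.choose_succ_right_eq (3 * m + 1) m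
  have hs : 3 * m + 1 - m = 2 * m + 1 := by omega
  rw [hs] at h6
  have h5 : (3 * m + 1) * Nat.choose (3 * m) m = Nat.choose (3 * m + 1) (m + 1) * (m + 1) := by
    simpa [Nat.succ_eq_add_one] using Nat.add_one_mul_choose_eq (3 * m) m
  have h4 : (3 * m + 1) * ((2 * m + 1) * (TernaryTree.forests 1 m).card)
      = (3 * m + 1) * (Nat.choose (3 * m) m) := by
    calc (3 * m + 1) * ((2 * m + 1) * (TernaryTree.forests 1 m).card)
        = (2 * m + 1) * ((3 * m + 1) * (TernaryTree.forests 1 m).card) := by ring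
      _ = (2 * m + 1) * Nat.choose (3 * m + 1) m := by rw [h3]
      _ = Nat.choose (3 * m + 1) m * (2 * m + 1) := by ring
      _ = Nat.choose (3 * m + 1) (m + 1) * (m + 1) := h6.symm
      _ = (3 * m + 1) * Nat.choose (3 * m) m := h5.symm
  exact Nat.eq_of_mul_eq_mul_left (by omega) h4
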